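/- Let γ > 0, let g: ℝ₊ → ℝ be differentiable strictly convex with lim_{m→∞} g'(m) = +∞, and consider ψ(α,β,δ) = φ(α + |P_K β|²/2 + δ) on ℝ × ℝ^4 × ℝ with φ = F* as above. Then for any (α₀,β₀,δ₀), prox_{ψ/γ}(α₀,β₀,δ₀) = (α₀,β₀,δ₀) if α₀ + |P_K β₀|²/2 + δ₀ ≤ g'(0); otherwise it equals (α₀ − s, P_K β₀/(1+s) + P_{K⁻} β₀, δ₀ − s), where s ≥ 0 is the unique nonnegative solution of γs = (g*)'(α₀ + δ₀ − 2s + |P_K β₀|²/(2(1+s)²)). -/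

import Mathlib

open scoped BigOperators
open Classical

noncomputable section

/-- Euclidean norm on ℝ⁴. -/
def nrm4 (w : Fin 4 → ℝ) : ℝ := Real.sqrt (∑ i, (w i) ^ 2)

/-- Euclidean projection onto `K = ℝ₊ × ℝ₋ × ℝ₊ × ℝ₋`. -/
def PK (w : Fin 4 → ℝ) : Fin 4 → ℝ := ![max (w 0) 0, min (w 1) 0, max (w 2) 0, min (w 3) 0]

/-- Squared Euclidean distance on `ℝ × ℝ⁴ × ℝ`. -/
def dsq3 (x y : ℝ × (Fin 4 → ℝ) × ℝ) : ℝ :=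
  (x.1 - y.1) ^ 2 + (∑ i, (x.2.1 i - y.2.1 i) ^ 2) + (x.2.2 - y.2.2) ^ 2

theorem grad_ineq (φ φ' : ℝ → ℝ) (hder : ∀ η, HasDerivAt φ (φ' η) η)
    (hconv : ConvexOn ℝ Set.univ φ) (x y : ℝ) :
    φ x + φ' x * (y - x) ≤ φ y := by
  rcases lt_trichotomy x y with h | h | h
  · have hs := hconv.le_slope_of_hasDerivAt (Set.mem_univ x) (Set.mem_univ y) h (hder x)
    rw [slope_def_field, le_div_iff₀ (by linarith)] at hs
    linarith
  · subst h; simp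
  · have hs := hconv.slope_le_of_hasDerivAt (Set.mem_univ y) (Set.mem_univ x) h (hder x)
    rw [slope_def_field, div_le_iff₀ (by linarith)] at hs
    nlinarith
theorem phi'_mono (φ φ' : ℝ → ℝ) (hder : ∀ η, HasDerivAt φ (φ' η) η)
    (hconv : ConvexOn ℝ Set.univ φ) : Monotone φ' := by
  intro x y hxy
  rcases eq_or_lt_of_le hxy with rfl | h
  · exact le_refl _
  · have h1 := hconv.le_slope_of_hasDerivAt (Set.mem_univ x) (Set.mem_univ y) h (hder x)
    have h2 := hconv.slope_le_of_hasDerivAt (Set.mem_univ x) (Set.mem_univ y) h (hder y)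
    exact h1.trans h2
theorem phi_const (φ φ' : ℝ → ℝ) (c : ℝ) (hder : ∀ η, HasDerivAt φ (φ' η) η)
    (hzero : ∀ η ≤ c, φ' η = 0) (x y : ℝ) (hxy : x ≤ y) (hyc : y ≤ c) : φ x = φ y := by
  rcases eq_or_lt_of_le hxy with rfl | h
  · rfl
  · obtain ⟨ξ, hξ, hval⟩ := exists_hasDerivAt_eq_slope φ φ' h
      (fun t _ => (hder t).continuousAt.continuousWithinAt) (fun t _ => hder t)
    rw [hzero ξ (by linarith [hξ.2])] at hval
    have hne : y - x ≠ 0 := by linarith [h]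
    field_simp at hval
    linarith

theorem keymax (s b x : ℝ) (hs : 0 ≤ s) :
    s * (max b 0 / (1 + s)) ^ 2 + (max b 0 / (1 + s) - max b 0) ^ 2
      ≤ s * (max x 0) ^ 2 + (x - b) ^ 2 := by
  have hs1 : (0:ℝ) < 1 + s := by linarith
  rcases le_total b 0 with hb | hb
  · rw [max_eq_right hb]
    simp only [zero_div, sub_zero, ne_eq, OfNat.ofNat_ne_zero, not_false_eq_true, zero_pow,
      mul_zero, zero_add]
    positivity
  · rw [max_eq_left hb]
    have key : s * (max b 0 / (1 + s)) ^ 2 + (max b 0 / (1 + s) - max b 0) ^ 2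
        = (s * (max b 0) ^ 2 + s ^ 2 * (max b 0) ^ 2) / (1 + s) ^ 2 := by
      field_simp
      ring
    rw [max_eq_left hb] at key
    rw [key, div_le_iff₀ (by positivity)]
    rcases le_total x 0 with hx | hx
    · rw [max_eq_right hx]
      have hxb : b ^ 2 ≤ (x - b) ^ 2 := by nlinarith [mul_nonneg hb (neg_nonneg.mpr hx)]
      nlinarith [mul_le_mul_of_nonneg_right hxb (sq_nonneg (1 + s)), sq_nonneg b,
        mul_nonneg (sq_nonneg b) hs]
    · rw [max_eq_left hx]
      nlinarith [mul_nonneg hs1.le (sq_nonneg ((1 + s) * x - b))]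

theorem keymin (s b x : ℝ) (hs : 0 ≤ s) :
    s * (min b 0 / (1 + s)) ^ 2 + (min b 0 / (1 + s) - min b 0) ^ 2
      ≤ s * (min x 0) ^ 2 + (x - b) ^ 2 := by
  have h1 : min b 0 = -max (-b) 0 := by
    rcases le_total b 0 with h | h
    · simp [min_eq_left h, max_eq_left (neg_nonneg.mpr h)]
    · simp [min_eq_right h, max_eq_right (neg_nonpos.mpr h)]
  have h2 : min x 0 = -max (-x) 0 := by
    rcases le_total x 0 with h | h
    · simp [min_eq_left h, max_eq_left (neg_nonneg.mpr h)]
    · simp [min_eq_right h, max_eq_right (neg_nonpos.mpr h)]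
  have := keymax s (-b) (-x) hs
  rw [h1, h2]
  ring_nf
  ring_nf at this
  nlinarith [this]

theorem nrm4_sq (w : Fin 4 → ℝ) : nrm4 w ^ 2 = ∑ i, w i ^ 2 := by
  rw [nrm4, Real.sq_sqrt]
  positivity

theorem pmax (s b : ℝ) (hs : 0 ≤ s) :
    max (max b 0 / (1 + s) + (b - max b 0)) 0 = max b 0 / (1 + s) := by
  have hs1 : (0:ℝ) < 1 + s := by linarith
  rcases le_total b 0 with hb | hb
  · rw [max_eq_right hb]; simp
    exact hb
  · rw [max_eq_left hb]
    simp only [sub_self, add_zero]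
    exact max_eq_left (by positivity)

theorem pmin (s b : ℝ) (hs : 0 ≤ s) :
    min (min b 0 / (1 + s) + (b - min b 0)) 0 = min b 0 / (1 + s) := by
  have hs1 : (0:ℝ) < 1 + s := by linarith
  rcases le_total b 0 with hb | hb
  · rw [min_eq_left hb]
    simp only [sub_self, add_zero]
    refine min_eq_left ?_
    exact div_nonpos_of_nonpos_of_nonneg hb hs1.le
  · rw [min_eq_right hb]; simp
    exact hb

theorem PK_pt (s : ℝ) (hs : 0 ≤ s) (β : Fin 4 → ℝ) :
    PK (fun i => PK β i / (1 + s) + (β i - PK β i)) = fun i => PK β i / (1 + s) := by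
  funext i
  fin_cases i <;>
    simp only [PK, Matrix.cons_val_zero, Matrix.cons_val_one, Matrix.head_cons,
      Matrix.cons_val_two, Matrix.tail_cons, Matrix.cons_val_three, Fin.isValue] <;>
    [exact pmax s (β 0) hs; exact pmin s (β 1) hs; exact pmax s (β 2) hs; exact pmin s (β 3) hs]

theorem hasDerivAt_f (φ φ' : ℝ → ℝ) (hder : ∀ η, HasDerivAt φ (φ' η) η)
    (γ : ℝ) (hγ : 0 < γ) (A N : ℝ) (s : ℝ) (hs : -1 < s) :
    HasDerivAt (fun t => φ (A - 2 * t + N / (2 * (1 + t) ^ 2)) / γ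
        + t ^ 2 + N * t ^ 2 / (2 * (1 + t) ^ 2))
      ((2 + N / (1 + s) ^ 3) * (s - φ' (A - 2 * s + N / (2 * (1 + s) ^ 2)) / γ)) s := by
  have hs1 : (0:ℝ) < 1 + s := by linarith
  have hne : (1 + s) ^ 2 ≠ 0 := by positivity
  have hbase : HasDerivAt (fun t : ℝ => (1 + t) ^ 2) (2 * (1 + s)) s := by
    have := ((hasDerivAt_id s).const_add 1).pow 2
    refine this.congr_deriv ?_
    norm_num
  have hinv : HasDerivAt (fun t : ℝ => ((1 + t) ^ 2)⁻¹)
      (-(2 * (1 + s)) / ((1 + s) ^ 2) ^ 2) s := hbase.inv hne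
  have hh : HasDerivAt (fun t => A - 2 * t + N / (2 * (1 + t) ^ 2))
      (-2 + N / 2 * (-(2 * (1 + s)) / ((1 + s) ^ 2) ^ 2)) s := by
    have h1 : HasDerivAt (fun t : ℝ => A - 2 * t) (-2) s := by
      simpa using ((hasDerivAt_id s).const_mul 2).const_sub A
    have h2 := hinv.const_mul (N / 2)
    have := h1.add h2
    refine this.congr_of_eventuallyEq (Filter.Eventually.of_forall fun t => ?_)
    simp only [Pi.add_apply, Pi.mul_apply]
    rw [div_eq_mul_inv, mul_inv]
    ring
  have hφ : HasDerivAt (fun t => φ (A - 2 * t + N / (2 * (1 + t) ^ 2)) / γ)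
      (φ' (A - 2 * s + N / (2 * (1 + s) ^ 2))
        * (-2 + N / 2 * (-(2 * (1 + s)) / ((1 + s) ^ 2) ^ 2)) / γ) s :=
    (HasDerivAt.comp s (hder _) hh).div_const γ
  have hq : HasDerivAt (fun t : ℝ => t ^ 2) (2 * s) s := by
    simpa using hasDerivAt_pow 2 s
  have hlast : HasDerivAt (fun t => N * t ^ 2 / (2 * (1 + t) ^ 2))
      (N / 2 * (2 * s * ((1 + s) ^ 2)⁻¹ + s ^ 2 * (-(2 * (1 + s)) / ((1 + s) ^ 2) ^ 2))) s := by
    have := (hq.mul hinv).const_mul (N / 2)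
    refine this.congr_of_eventuallyEq (Filter.Eventually.of_forall fun t => ?_)
    simp only [Pi.add_apply, Pi.mul_apply]
    rw [div_eq_mul_inv, mul_inv]
    ring
  have := (hφ.add hq).add hlast
  refine this.congr_deriv ?_
  field_simp
  ring

theorem exists_sol (φ φ' : ℝ → ℝ) (c : ℝ) (hder : ∀ η, HasDerivAt φ (φ' η) η)
    (hmono : Monotone φ) (hzero : ∀ η ≤ c, φ' η = 0) (hpos : ∀ η, c < η → 0 < φ' η)
    (γ : ℝ) (hγ : 0 < γ) (A N : ℝ) (hN : 0 ≤ N) (hgt : c < A + N / 2) :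
    ∃ s : ℝ, 0 ≤ s ∧ γ * s = φ' (A - 2 * s + N / (2 * (1 + s) ^ 2)) := by
  obtain ⟨f, hf⟩ : ∃ f : ℝ → ℝ, f = fun t => φ (A - 2 * t + N / (2 * (1 + t) ^ 2)) / γ
      + t ^ 2 + N * t ^ 2 / (2 * (1 + t) ^ 2) := ⟨_, rfl⟩
  obtain ⟨m, hm⟩ : ∃ m : ℝ, m = φ (c - 1) := ⟨_, rfl⟩
  have hlow : ∀ x : ℝ, m ≤ φ x := by
    intro x
    rw [hm]
    rcases le_total (c - 1) x with h | h
    · exact hmono h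
    · exact le_of_eq (phi_const φ φ' c hder hzero x (c - 1) h (by linarith)).symm
  have flow : ∀ t : ℝ, 0 ≤ t → m / γ + t ^ 2 ≤ f t := by
    intro t ht
    have h1 : m / γ ≤ φ (A - 2 * t + N / (2 * (1 + t) ^ 2)) / γ := by
      gcongr
      exact hlow _
    have h2 : (0:ℝ) ≤ N * t ^ 2 / (2 * (1 + t) ^ 2) := by positivity
    rw [hf]
    simp only []
    linarith
  obtain ⟨R, hR⟩ : ∃ R : ℝ, R = 1 + Real.sqrt (max 0 (f 0 - m / γ)) := ⟨_, rfl⟩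
  have hR1 : 1 ≤ R := by
    rw [hR]
    have := Real.sqrt_nonneg (max 0 (f 0 - m / γ))
    linarith
  have hsq : f 0 - m / γ ≤ Real.sqrt (max 0 (f 0 - m / γ)) ^ 2 := by
    rw [Real.sq_sqrt (le_max_left _ _)]
    exact le_max_right _ _
  have hfR : f 0 < f R := by
    have h1 := flow R (by linarith)
    have h2 : f 0 + 1 ≤ m / γ + R ^ 2 := by
      rw [hR]
      have hs0 := Real.sqrt_nonneg (max 0 (f 0 - m / γ))
      nlinarith
    linarith
  have hcont : ContinuousOn f (Set.Icc 0 R) := by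
    rw [hf]
    exact fun t ht =>
      ((hasDerivAt_f φ φ' hder γ hγ A N t (by linarith [ht.1])).continuousAt).continuousWithinAt
  obtain ⟨s, hsmem, hmin⟩ := isCompact_Icc.exists_isMinOn
    (Set.nonempty_Icc.mpr (by linarith)) hcont
  -- find a point with smaller value than f 0
  have hd0 := hasDerivAt_f φ φ' hder γ hγ A N 0 (by norm_num)
  rw [← hf] at hd0
  have hd0neg : (2 + N / (1 + 0) ^ 3) * (0 - φ' (A - 2 * 0 + N / (2 * (1 + 0) ^ 2)) / γ) < 0 := by
    have hη : A - 2 * 0 + N / (2 * (1 + 0) ^ 2) = A + N / 2 := by norm_num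
    rw [hη]
    have := hpos _ hgt
    have h2 : (0:ℝ) < 2 + N / (1 + 0) ^ 3 := by norm_num; linarith
    apply mul_neg_of_pos_of_neg h2
    simp only [zero_sub, neg_neg, neg_lt, neg_zero]
    positivity
  have htend := hasDerivAt_iff_tendsto_slope.mp hd0
  have ev1 : ∀ᶠ x in nhdsWithin 0 (Set.Ioi 0), slope f 0 x < 0 :=
    (htend.eventually_lt_const hd0neg).filter_mono
      (nhdsWithin_mono 0 (fun x hx => ne_of_gt hx))
  have ev2 : ∀ᶠ x in nhdsWithin 0 (Set.Ioi 0), x ∈ Set.Ioo (0:ℝ) R :=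
    Filter.eventually_of_mem (Ioo_mem_nhdsGT_of_mem ⟨le_refl 0, by linarith⟩) (fun x hx => hx)
  obtain ⟨x, hx1, hx2⟩ := (ev1.and ev2).exists
  have hxlt : f x < f 0 := by
    rw [slope_def_field, sub_zero] at hx1
    have := mul_neg_of_neg_of_pos hx1 hx2.1
    rw [div_mul_cancel₀ _ (ne_of_gt hx2.1)] at this
    linarith
  have hfs : f s ≤ f x := hmin ⟨hx2.1.le, hx2.2.le⟩
  have hs0 : 0 < s := by
    rcases eq_or_lt_of_le hsmem.1 with h | h
    · exfalso; rw [← h] at hfs; linarith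
    · exact h
  have hsR : s < R := by
    rcases eq_or_lt_of_le hsmem.2 with h | h
    · exfalso; rw [h] at hfs; linarith
    · exact h
  have hloc : IsLocalMin f s := hmin.isLocalMin (Icc_mem_nhds hs0 hsR)
  have hds := hasDerivAt_f φ φ' hder γ hγ A N s (by linarith)
  rw [← hf] at hds
  have hzero' := hloc.hasDerivAt_eq_zero hds
  have hfac : (0:ℝ) < 2 + N / (1 + s) ^ 3 := by
    have : (0:ℝ) < 1 + s := by linarith
    positivity
  rcases mul_eq_zero.mp hzero' with h | h
  · exact absurd h (ne_of_gt hfac)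
  · refine ⟨s, hs0.le, ?_⟩
    set val := φ' (A - 2 * s + N / (2 * (1 + s) ^ 2)) with hval
    have h' : val / γ = s := by linarith
    rw [div_eq_iff (ne_of_gt hγ)] at h'
    linarith

theorem uniq_sol (φ φ' : ℝ → ℝ) (c : ℝ) (hder : ∀ η, HasDerivAt φ (φ' η) η)
    (hconv : ConvexOn ℝ Set.univ φ)
    (γ : ℝ) (hγ : 0 < γ) (A N : ℝ) (hN : 0 ≤ N) (s₁ s₂ : ℝ)
    (h₁ : 0 ≤ s₁ ∧ γ * s₁ = φ' (A - 2 * s₁ + N / (2 * (1 + s₁) ^ 2)))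
    (h₂ : 0 ≤ s₂ ∧ γ * s₂ = φ' (A - 2 * s₂ + N / (2 * (1 + s₂) ^ 2))) : s₁ = s₂ := by
  have key : ∀ u v : ℝ, 0 ≤ u → 0 ≤ v →
      γ * u = φ' (A - 2 * u + N / (2 * (1 + u) ^ 2)) →
      γ * v = φ' (A - 2 * v + N / (2 * (1 + v) ^ 2)) → u < v → False := by
    intro u v hu hv hequ heqv huv
    have hdec : A - 2 * v + N / (2 * (1 + v) ^ 2) ≤ A - 2 * u + N / (2 * (1 + u) ^ 2) := by
      have : N / (2 * (1 + v) ^ 2) ≤ N / (2 * (1 + u) ^ 2) := by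
        gcongr
        all_goals nlinarith
      linarith
    have := phi'_mono φ φ' hder hconv hdec
    rw [← hequ, ← heqv] at this
    nlinarith
  rcases lt_trichotomy s₁ s₂ with h | h | h
  · exact absurd (key s₁ s₂ h₁.1 h₂.1 h₁.2 h₂.2 h) (fun x => x)
  · exact h
  · exact absurd (key s₂ s₁ h₂.1 h₁.1 h₂.2 h₁.2 h) (fun x => x)

theorem min_ineq (φ φ' : ℝ → ℝ) (hder : ∀ η, HasDerivAt φ (φ' η) η)
    (hconv : ConvexOn ℝ Set.univ φ) (γ : ℝ) (hγ : 0 < γ)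
    (α₀ δ₀ : ℝ) (β₀ : Fin 4 → ℝ) (s : ℝ) (hs : 0 ≤ s)
    (heq : γ * s = φ' (α₀ + δ₀ - 2 * s + nrm4 (PK β₀) ^ 2 / (2 * (1 + s) ^ 2)))
    (z : ℝ × (Fin 4 → ℝ) × ℝ) :
    (let pt : ℝ × (Fin 4 → ℝ) × ℝ :=
      (α₀ - s, fun i => PK β₀ i / (1 + s) + (β₀ i - PK β₀ i), δ₀ - s)
    φ (pt.1 + nrm4 (PK pt.2.1) ^ 2 / 2 + pt.2.2) / γ + dsq3 pt (α₀, β₀, δ₀) / 2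
      ≤ φ (z.1 + nrm4 (PK z.2.1) ^ 2 / 2 + z.2.2) / γ + dsq3 z (α₀, β₀, δ₀) / 2) := by
  have hs1 : (0:ℝ) < 1 + s := by linarith
  show φ ((α₀ - s) + nrm4 (PK (fun i => PK β₀ i / (1 + s) + (β₀ i - PK β₀ i))) ^ 2 / 2
        + (δ₀ - s)) / γ
      + dsq3 (α₀ - s, fun i => PK β₀ i / (1 + s) + (β₀ i - PK β₀ i), δ₀ - s) (α₀, β₀, δ₀) / 2
    ≤ φ (z.1 + nrm4 (PK z.2.1) ^ 2 / 2 + z.2.2) / γ + dsq3 z (α₀, β₀, δ₀) / 2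
  rw [PK_pt s hs β₀]
  simp only [dsq3, nrm4_sq]
  have hptsum : ∑ i, (PK β₀ i / (1 + s) + (β₀ i - PK β₀ i) - β₀ i) ^ 2
      = ∑ i, (PK β₀ i / (1 + s) - PK β₀ i) ^ 2 :=
    Finset.sum_congr rfl (fun i _ => by ring)
  rw [hptsum]
  have harge : α₀ + δ₀ - 2 * s + nrm4 (PK β₀) ^ 2 / (2 * (1 + s) ^ 2)
      = (α₀ - s) + (∑ i, (PK β₀ i / (1 + s)) ^ 2) / 2 + (δ₀ - s) := by
    rw [nrm4_sq]
    simp only [div_pow]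
    rw [← Finset.sum_div]
    field_simp
    ring
  rw [harge] at heq
  -- gradient inequality
  have grad := grad_ineq φ φ' hder hconv
    ((α₀ - s) + (∑ i, (PK β₀ i / (1 + s)) ^ 2) / 2 + (δ₀ - s))
    (z.1 + (∑ i, (PK z.2.1 i) ^ 2) / 2 + z.2.2)
  rw [← heq] at grad
  have h3 : φ ((α₀ - s) + (∑ i, (PK β₀ i / (1 + s)) ^ 2) / 2 + (δ₀ - s)) / γ
      + s * ((z.1 + (∑ i, (PK z.2.1 i) ^ 2) / 2 + z.2.2)
        - ((α₀ - s) + (∑ i, (PK β₀ i / (1 + s)) ^ 2) / 2 + (δ₀ - s)))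
      ≤ φ (z.1 + (∑ i, (PK z.2.1 i) ^ 2) / 2 + z.2.2) / γ := by
    rw [div_add' _ _ _ (ne_of_gt hγ), div_le_div_iff₀ hγ hγ]
    nlinarith [grad]
  -- coordinatewise inequality
  have hsum : ∑ i, (s * (PK β₀ i / (1 + s)) ^ 2 + (PK β₀ i / (1 + s) - PK β₀ i) ^ 2)
      ≤ ∑ i, (s * (PK z.2.1 i) ^ 2 + (z.2.1 i - β₀ i) ^ 2) := by
    apply Finset.sum_le_sum
    intro i _
    fin_cases i <;>
      simp only [PK, Matrix.cons_val_zero, Matrix.cons_val_one, Matrix.head_cons,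
        Matrix.cons_val_two, Matrix.tail_cons, Matrix.cons_val_three, Fin.isValue]
    · exact keymax s (β₀ 0) (z.2.1 0) hs
    · exact keymin s (β₀ 1) (z.2.1 1) hs
    · exact keymax s (β₀ 2) (z.2.1 2) hs
    · exact keymin s (β₀ 3) (z.2.1 3) hs
  rw [Finset.sum_add_distrib, Finset.sum_add_distrib, ← Finset.mul_sum, ← Finset.mul_sum]
    at hsum
  nlinarith [h3, hsum, sq_nonneg (z.1 - α₀ + s), sq_nonneg (z.2.2 - δ₀ + s)]

/-- computation of `prox_{ψ/γ}` for
`ψ(α,β,δ) = φ(α + |P_K β|²/2 + δ)`, where `φ = F*` is convex, nondecreasing,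
differentiable, with `φ' = 0` on `(−∞, g'(0)]` and `φ' = (g*)' > 0`, strictly
increasing, beyond `g'(0)` (here `c` stands for `g'(0)`). -/
theorem stmt10 (γ : ℝ) (hγ : 0 < γ) (φ φ' : ℝ → ℝ) (c : ℝ)
    (hder : ∀ η, HasDerivAt φ (φ' η) η)
    (hconv : ConvexOn ℝ Set.univ φ)
    (hmono : Monotone φ)
    (hzero : ∀ η ≤ c, φ' η = 0)
    (hpos : ∀ η, c < η → 0 < φ' η)
    (hsm : StrictMonoOn φ' (Set.Ici c))
    (α₀ δ₀ : ℝ) (β₀ : Fin 4 → ℝ) :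
    -- if the argument is ≤ g'(0), the point is its own prox
    (α₀ + nrm4 (PK β₀) ^ 2 / 2 + δ₀ ≤ c →
      ∀ z : ℝ × (Fin 4 → ℝ) × ℝ,
        φ (α₀ + nrm4 (PK β₀) ^ 2 / 2 + δ₀) / γ
          ≤ φ (z.1 + nrm4 (PK z.2.1) ^ 2 / 2 + z.2.2) / γ + dsq3 z (α₀, β₀, δ₀) / 2)
    ∧ -- otherwise there is a unique s ≥ 0 solving the scalar equation, and the prox
      -- is (α₀ − s, P_K β₀/(1+s) + P_{K⁻} β₀, δ₀ − s)
    (c < α₀ + nrm4 (PK β₀) ^ 2 / 2 + δ₀ →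
      (∃! s : ℝ, 0 ≤ s ∧
        γ * s = φ' (α₀ + δ₀ - 2 * s + nrm4 (PK β₀) ^ 2 / (2 * (1 + s) ^ 2)))
      ∧ ∀ s : ℝ, 0 ≤ s →
          γ * s = φ' (α₀ + δ₀ - 2 * s + nrm4 (PK β₀) ^ 2 / (2 * (1 + s) ^ 2)) →
          ∀ z : ℝ × (Fin 4 → ℝ) × ℝ,
            (let pt : ℝ × (Fin 4 → ℝ) × ℝ :=
              (α₀ - s, fun i => PK β₀ i / (1 + s) + (β₀ i - PK β₀ i), δ₀ - s)
            φ (pt.1 + nrm4 (PK pt.2.1) ^ 2 / 2 + pt.2.2) / γ + dsq3 pt (α₀, β₀, δ₀) / 2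
              ≤ φ (z.1 + nrm4 (PK z.2.1) ^ 2 / 2 + z.2.2) / γ + dsq3 z (α₀, β₀, δ₀) / 2)) := by
  constructor
  · intro hle z
    have h1 : φ (α₀ + nrm4 (PK β₀) ^ 2 / 2 + δ₀) ≤ φ (z.1 + nrm4 (PK z.2.1) ^ 2 / 2 + z.2.2) := by
      rcases le_total (α₀ + nrm4 (PK β₀) ^ 2 / 2 + δ₀) (z.1 + nrm4 (PK z.2.1) ^ 2 / 2 + z.2.2)
        with h | h
      · exact hmono h
      · exact (phi_const φ φ' c hder hzero _ _ h hle).symm.le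
    have h2 : 0 ≤ dsq3 z (α₀, β₀, δ₀) := by
      simp only [dsq3]
      positivity
    have h3 : φ (α₀ + nrm4 (PK β₀) ^ 2 / 2 + δ₀) / γ
        ≤ φ (z.1 + nrm4 (PK z.2.1) ^ 2 / 2 + z.2.2) / γ := by
      gcongr
    linarith
  · intro hgt
    have hN : 0 ≤ nrm4 (PK β₀) ^ 2 := sq_nonneg _
    have hgt' : c < (α₀ + δ₀) + nrm4 (PK β₀) ^ 2 / 2 := by linarith
    obtain ⟨s, hs, heq⟩ := exists_sol φ φ' c hder hmono hzero hpos γ hγ (α₀ + δ₀)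
      (nrm4 (PK β₀) ^ 2) hN hgt'
    refine ⟨⟨s, ⟨hs, heq⟩, fun y hy =>
      uniq_sol φ φ' c hder hconv γ hγ (α₀ + δ₀) (nrm4 (PK β₀) ^ 2) hN y s hy ⟨hs, heq⟩⟩, ?_⟩
    intro t ht heqt z
    exact min_ineq φ φ' hder hconv γ hγ α₀ δ₀ β₀ t ht heqt z
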